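/- For any fixed p, μ ∈ ℂ and θ ∈ ℤ, the ℂ-vector space with basis {L_{α,i} | α, i ∈ ℤ} equipped with the bracket [L_{α,i}, L_{β,j}] = ((i+q)(β+p) − (j+q)(α+p)) L_{α+β, i+j} + (i−j)μ L_{α+β+θ, i+j} is a Lie algebra, for any fixed q ∈ ℂ. -/

import Mathlib

/-- The bracket of `𝓑(p,q,μ,θ)` on the free `ℂ`-module with basis
`{L_{α,i} | α, i ∈ ℤ}` (modelled as `ℤ × ℤ →₀ ℂ`, `L_{α,i} = single (α,i) 1`):
`[L_{α,i}, L_{β,j}] = ((i+q)(β+p) − (j+q)(α+p)) L_{α+β,i+j} + (i−j)μ L_{α+β+θ,i+j}`. -/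
noncomputable def bBracket (p q μ : ℂ) (θ : ℤ) (f g : ℤ × ℤ →₀ ℂ) : ℤ × ℤ →₀ ℂ :=
  f.sum fun a x => g.sum fun b y =>
    Finsupp.single (a.1 + b.1, a.2 + b.2)
      (x * y * (((a.2 : ℂ) + q) * ((b.1 : ℂ) + p) - ((b.2 : ℂ) + q) * ((a.1 : ℂ) + p)))
    + Finsupp.single (a.1 + b.1 + θ, a.2 + b.2) (x * y * ((a.2 : ℂ) - (b.2 : ℂ)) * μ)

lemma bB_add_left (p q μ : ℂ) (θ : ℤ) (f f' g : ℤ × ℤ →₀ ℂ) :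
    bBracket p q μ θ (f + f') g = bBracket p q μ θ f g + bBracket p q μ θ f' g := by
  unfold bBracket
  rw [Finsupp.sum_add_index]
  · intro a _
    simp only [zero_mul, Finsupp.single_zero, add_zero, Finsupp.sum, Finset.sum_const_zero]
  · intro a _ x x'
    rw [← Finsupp.sum_add]
    apply Finsupp.sum_congr
    intro b _
    rw [add_add_add_comm]
    congr 1 <;> rw [← Finsupp.single_add] <;> exact congrArg _ (by ring)

lemma bB_add_right (p q μ : ℂ) (θ : ℤ) (f g g' : ℤ × ℤ →₀ ℂ) :
    bBracket p q μ θ f (g + g') = bBracket p q μ θ f g + bBracket p q μ θ f g' := by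
  unfold bBracket
  rw [← Finsupp.sum_add]
  apply Finsupp.sum_congr
  intro a _
  rw [Finsupp.sum_add_index]
  · intro b _
    simp only [mul_zero, zero_mul, Finsupp.single_zero, add_zero]
  · intro b _ y y'
    rw [add_add_add_comm]
    congr 1 <;> rw [← Finsupp.single_add] <;> exact congrArg _ (by ring)

lemma bB_smul_left (p q μ : ℂ) (θ : ℤ) (c : ℂ) (f g : ℤ × ℤ →₀ ℂ) :
    bBracket p q μ θ (c • f) g = c • bBracket p q μ θ f g := by
  unfold bBracket
  rw [Finsupp.sum_smul_index, Finsupp.smul_sum]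
  · apply Finsupp.sum_congr
    intro a _
    rw [Finsupp.smul_sum]
    apply Finsupp.sum_congr
    intro b _
    rw [smul_add, Finsupp.smul_single, Finsupp.smul_single, smul_eq_mul, smul_eq_mul]
    congr 1 <;> exact congrArg _ (by ring)
  · intro a
    simp only [zero_mul, Finsupp.single_zero, add_zero, Finsupp.sum, Finset.sum_const_zero]

lemma bB_smul_right (p q μ : ℂ) (θ : ℤ) (c : ℂ) (f g : ℤ × ℤ →₀ ℂ) :
    bBracket p q μ θ f (c • g) = c • bBracket p q μ θ f g := by
  unfold bBracket
  rw [Finsupp.smul_sum]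
  apply Finsupp.sum_congr
  intro a _
  rw [Finsupp.sum_smul_index, Finsupp.smul_sum]
  · apply Finsupp.sum_congr
    intro b _
    rw [smul_add, Finsupp.smul_single, Finsupp.smul_single, smul_eq_mul, smul_eq_mul]
    congr 1 <;> exact congrArg _ (by ring)
  · intro b
    simp only [mul_zero, zero_mul, Finsupp.single_zero, add_zero]

lemma bB_zero_left (p q μ : ℂ) (θ : ℤ) (g : ℤ × ℤ →₀ ℂ) :
    bBracket p q μ θ 0 g = 0 := by
  unfold bBracket; exact Finsupp.sum_zero_index

lemma bB_zero_right (p q μ : ℂ) (θ : ℤ) (f : ℤ × ℤ →₀ ℂ) :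
    bBracket p q μ θ f 0 = 0 := by
  unfold bBracket
  simp only [Finsupp.sum_zero_index, Finsupp.sum, Finsupp.support_zero, Finset.sum_empty, Finset.sum_const_zero]

lemma bB_single_single (p q μ : ℂ) (θ : ℤ) (a b : ℤ × ℤ) (x y : ℂ) :
    bBracket p q μ θ (Finsupp.single a x) (Finsupp.single b y) =
      Finsupp.single (a.1 + b.1, a.2 + b.2)
        (x * y * (((a.2 : ℂ) + q) * ((b.1 : ℂ) + p) - ((b.2 : ℂ) + q) * ((a.1 : ℂ) + p)))
      + Finsupp.single (a.1 + b.1 + θ, a.2 + b.2) (x * y * ((a.2 : ℂ) - (b.2 : ℂ)) * μ) := by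
  unfold bBracket
  rw [Finsupp.sum_single_index, Finsupp.sum_single_index]
  · simp only [mul_zero, zero_mul, Finsupp.single_zero, add_zero]
  · rw [Finsupp.sum_single_index] <;>
      simp only [mul_zero, zero_mul, Finsupp.single_zero, add_zero]

lemma bB_antisymm_single (p q μ : ℂ) (θ : ℤ) (a b : ℤ × ℤ) (x y : ℂ) :
    bBracket p q μ θ (Finsupp.single a x) (Finsupp.single b y)
      = - bBracket p q μ θ (Finsupp.single b y) (Finsupp.single a x) := by
  rw [bB_single_single, bB_single_single, add_comm b.1 a.1, add_comm b.2 a.2,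
    neg_add, ← Finsupp.single_neg, ← Finsupp.single_neg]
  congr 1 <;> exact congrArg _ (by ring)

set_option maxHeartbeats 2000000 in
lemma bB_jacobi_single (p q μ : ℂ) (θ : ℤ) (a b c : ℤ × ℤ) (x y z : ℂ) :
    bBracket p q μ θ (Finsupp.single a x)
        (bBracket p q μ θ (Finsupp.single b y) (Finsupp.single c z))
      + bBracket p q μ θ (Finsupp.single c z)
        (bBracket p q μ θ (Finsupp.single a x) (Finsupp.single b y))
      + bBracket p q μ θ (Finsupp.single b y)
        (bBracket p q μ θ (Finsupp.single c z) (Finsupp.single a x)) = 0 := by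
  simp only [bB_single_single, bB_add_right, bB_single_single]
  push_cast
  ring_nf
  ext n
  simp only [Finsupp.coe_add, Pi.add_apply, Finsupp.single_apply, Finsupp.coe_zero, Pi.zero_apply]
  split_ifs <;> ring

lemma bB_antisymm (p q μ : ℂ) (θ : ℤ) (f g : ℤ × ℤ →₀ ℂ) :
    bBracket p q μ θ f g = - bBracket p q μ θ g f := by
  induction f using Finsupp.induction_linear with
  | zero => simp [bB_zero_left, bB_zero_right]
  | add f f' hf hf' =>
      rw [bB_add_left, bB_add_right, hf, hf', neg_add]
  | single a x =>
      induction g using Finsupp.induction_linear with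
      | zero => simp [bB_zero_left, bB_zero_right]
      | add g g' hg hg' =>
          rw [bB_add_left, bB_add_right, hg, hg', neg_add]
      | single b y => exact bB_antisymm_single p q μ θ a b x y

lemma bB_jacobi (p q μ : ℂ) (θ : ℤ) (f g h : ℤ × ℤ →₀ ℂ) :
    bBracket p q μ θ f (bBracket p q μ θ g h)
      + bBracket p q μ θ h (bBracket p q μ θ f g)
      + bBracket p q μ θ g (bBracket p q μ θ h f) = 0 := by
  induction f using Finsupp.induction_linear with
  | zero => simp [bB_zero_left, bB_zero_right]
  | add f f' hf hf' =>
      rw [bB_add_left, bB_add_left, bB_add_right, bB_add_right, bB_add_right]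
      rw [show ∀ A B C D E F : ℤ × ℤ →₀ ℂ, A + B + (C + D) + (E + F)
            = (A + C + E) + (B + D + F) by intros; abel, hf, hf', add_zero]
  | single a x =>
    induction g using Finsupp.induction_linear with
    | zero => simp [bB_zero_left, bB_zero_right]
    | add g g' hg hg' =>
        rw [bB_add_left, bB_add_left, bB_add_right, bB_add_right, bB_add_right]
        rw [show ∀ A B C D E F : ℤ × ℤ →₀ ℂ, A + B + (C + D) + (E + F)
              = (A + C + E) + (B + D + F) by intros; abel, hg, hg', add_zero]
    | single b y =>
      induction h using Finsupp.induction_linear with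
      | zero => simp [bB_zero_left, bB_zero_right]
      | add h h' hh hh' =>
          rw [bB_add_left, bB_add_left, bB_add_right, bB_add_right, bB_add_right]
          rw [show ∀ A B C D E F : ℤ × ℤ →₀ ℂ, A + B + (C + D) + (E + F)
                = (A + C + E) + (B + D + F) by intros; abel, hh, hh', add_zero]
      | single c z => exact bB_jacobi_single p q μ θ a b c x y z


/-- `𝓑(p,q,μ,θ)` is a Lie algebra: the bracket is bilinear, antisymmetric,
and satisfies the Jacobi identity. -/
theorem stmt3 (p q μ : ℂ) (θ : ℤ) :
    (∀ f f' g : ℤ × ℤ →₀ ℂ,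
      bBracket p q μ θ (f + f') g = bBracket p q μ θ f g + bBracket p q μ θ f' g) ∧
    (∀ f g g' : ℤ × ℤ →₀ ℂ,
      bBracket p q μ θ f (g + g') = bBracket p q μ θ f g + bBracket p q μ θ f g') ∧
    (∀ (c : ℂ) (f g : ℤ × ℤ →₀ ℂ),
      bBracket p q μ θ (c • f) g = c • bBracket p q μ θ f g ∧
      bBracket p q μ θ f (c • g) = c • bBracket p q μ θ f g) ∧
    (∀ f g : ℤ × ℤ →₀ ℂ, bBracket p q μ θ f g = - bBracket p q μ θ g f) ∧
    (∀ f g h : ℤ × ℤ →₀ ℂ,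
      bBracket p q μ θ f (bBracket p q μ θ g h)
        + bBracket p q μ θ h (bBracket p q μ θ f g)
        + bBracket p q μ θ g (bBracket p q μ θ h f) = 0) :=
  ⟨bB_add_left p q μ θ, bB_add_right p q μ θ,
   fun c f g => ⟨bB_smul_left p q μ θ c f g, bB_smul_right p q μ θ c f g⟩,
   bB_antisymm p q μ θ, bB_jacobi p q μ θ⟩
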